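/- arXiv:2510.22686 — 5 statements merged into one kernel-verified Lean document; each statement's English description precedes it below -/
import Mathlib

section
/- The distributional Bellman expectation operator T^π is a γ-contraction in the supremum p-Wasserstein metric: for any two conditional return-distribution functions p_θ, p_θ', we have W̄_p(T^π p_θ, T^π p_θ') ≤ γ · W̄_p(p_θ, p_θ'), where 0 ≤ γ < 1 is the discount factor. -/
open MeasureTheory ENNReal

/-- The p-Wasserstein distance between two measures on the reals. -/
noncomputable def Wp (p : ℝ) (μ ν : MeasureTheory.Measure ℝ) : ℝ≥0∞ :=
  (⨅ π ∈ {π : MeasureTheory.Measure (ℝ × ℝ) |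
      π.map Prod.fst = μ ∧ π.map Prod.snd = ν},
    ∫⁻ q, (edist q.1 q.2) ^ p ∂π) ^ (1 / p)

/-- The supremum p-Wasserstein metric over the states. -/
noncomputable def WpBar (S : Type*) (p : ℝ) (P Q : S → MeasureTheory.Measure ℝ) : ℝ≥0∞ :=
  ⨆ s : S, Wp p (P s) (Q s)

/-- The distributional Bellman expectation operator: `(bellman pol Pk r γ Z) s` is the
law of `r s a + γ * z` where `a ∼ pol s`, `s' ∼ Pk s a`, and `z ∼ Z s'`. -/
noncomputable def bellman {S A : Type*} [Fintype S] [Fintype A]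
    (pol : S → A → ℝ≥0∞) (Pk : S → A → S → ℝ≥0∞) (r : S → A → ℝ) (γ : ℝ)
    (Z : S → MeasureTheory.Measure ℝ) : S → MeasureTheory.Measure ℝ :=
  fun s => ∑ a : A, ∑ s' : S,
    (pol s a * Pk s a s') • ((Z s').map (fun z => r s a + γ * z))

namespace BellmanAux

/-- map commutes with finite sums of measures. -/
lemma map_finset_sum {α β ι : Type*} [MeasurableSpace α] [MeasurableSpace β]
    (s : Finset ι) (μ : ι → Measure α) {f : α → β} (hf : Measurable f) :
    (∑ i ∈ s, μ i).map f = ∑ i ∈ s, (μ i).map f := by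
  classical
  induction s using Finset.induction with
  | empty => simp
  | insert _ _ h ih =>
      rw [Finset.sum_insert h, Finset.sum_insert h, Measure.map_add _ _ hf, ih]

lemma edist_affine (r γ x y : ℝ) (hγ : 0 ≤ γ) :
    edist (r + γ * x) (r + γ * y) = ENNReal.ofReal γ * edist x y := by
  have h1 : (r + γ * x) - (r + γ * y) = γ * (x - y) := by ring
  rw [edist_dist, edist_dist, Real.dist_eq, Real.dist_eq, h1, abs_mul,
    abs_of_nonneg hγ, ENNReal.ofReal_mul hγ]

lemma measurable_edist_rpow (p : ℝ) :
    Measurable fun q : ℝ × ℝ => edist q.1 q.2 ^ p :=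
  (measurable_fst.edist measurable_snd).pow_const p

/-- Key step: given couplings of `Zθ s'` and `Zθ' s'` whose transport cost is at most `B`,
the transport cost between the Bellman images is at most `γ^p * B`. -/
lemma key {S A : Type*} [Fintype S] [Fintype A]
    (pol : S → A → ℝ≥0∞) (hpol : ∀ s, ∑ a : A, pol s a = 1)
    (Pk : S → A → S → ℝ≥0∞) (hPk : ∀ s a, ∑ s' : S, Pk s a s' = 1)
    (r : S → A → ℝ) (γ : ℝ) (hγ0 : 0 ≤ γ) (p : ℝ) (hp0 : 0 ≤ p)
    (Zθ Zθ' : S → Measure ℝ) (s : S)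
    (π : S → Measure (ℝ × ℝ))
    (hπ1 : ∀ s', (π s').map Prod.fst = Zθ s')
    (hπ2 : ∀ s', (π s').map Prod.snd = Zθ' s')
    (B : ℝ≥0∞) (hB : ∀ s', ∫⁻ q, edist q.1 q.2 ^ p ∂(π s') ≤ B) :
    (⨅ π ∈ {π : Measure (ℝ × ℝ) |
      π.map Prod.fst = bellman pol Pk r γ Zθ s ∧
      π.map Prod.snd = bellman pol Pk r γ Zθ' s},
      ∫⁻ q, (edist q.1 q.2) ^ p ∂π) ≤ ENNReal.ofReal γ ^ p * B := by
  classical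
  set φ : A → ℝ → ℝ := fun a z => r s a + γ * z with hφdef
  have hφ : ∀ a, Measurable (φ a) := fun a =>
    measurable_const.add (measurable_id.const_mul γ)
  set g : A → ℝ × ℝ → ℝ × ℝ := fun a q => (φ a q.1, φ a q.2) with hgdef
  have hg : ∀ a, Measurable (g a) := fun a =>
    ((hφ a).comp measurable_fst).prodMk ((hφ a).comp measurable_snd)
  set μc : Measure (ℝ × ℝ) :=
    ∑ a : A, ∑ s' : S, (pol s a * Pk s a s') • ((π s').map (g a)) with hμcdef
  have hmarg : ∀ (pr : ℝ × ℝ → ℝ) (_ : Measurable pr)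
      (Z : S → Measure ℝ) (_ : ∀ s', (π s').map pr = Z s')
      (_ : ∀ a, pr ∘ (g a) = (φ a) ∘ pr),
      μc.map pr = ∑ a : A, ∑ s' : S,
        (pol s a * Pk s a s') • ((Z s').map (φ a)) := by
    intro pr hpr Z hZ hcomm
    rw [hμcdef, map_finset_sum _ _ hpr]
    refine Finset.sum_congr rfl fun a _ => ?_
    rw [map_finset_sum _ _ hpr]
    refine Finset.sum_congr rfl fun s' _ => ?_
    rw [Measure.map_smul, Measure.map_map hpr (hg a), hcomm a,
      ← Measure.map_map (hφ a) hpr, hZ s']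
  have hmem : μc ∈ {π : Measure (ℝ × ℝ) |
      π.map Prod.fst = bellman pol Pk r γ Zθ s ∧
      π.map Prod.snd = bellman pol Pk r γ Zθ' s} := by
    constructor
    · exact hmarg Prod.fst measurable_fst Zθ hπ1 (fun a => rfl)
    · exact hmarg Prod.snd measurable_snd Zθ' hπ2 (fun a => rfl)
  refine le_trans (iInf₂_le μc hmem) ?_
  have hint : ∫⁻ q, edist q.1 q.2 ^ p ∂μc
      = ∑ a : A, ∑ s' : S, (pol s a * Pk s a s') *
          (ENNReal.ofReal γ ^ p * ∫⁻ q, edist q.1 q.2 ^ p ∂(π s')) := by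
    rw [hμcdef, lintegral_finset_sum_measure]
    refine Finset.sum_congr rfl fun a _ => ?_
    rw [lintegral_finset_sum_measure]
    refine Finset.sum_congr rfl fun s' _ => ?_
    rw [lintegral_smul_measure, lintegral_map (measurable_edist_rpow p) (hg a)]
    congr 1
    rw [← lintegral_const_mul _ (measurable_edist_rpow p)]
    refine lintegral_congr fun q => ?_
    show edist (φ a q.1) (φ a q.2) ^ p = _
    rw [hφdef]
    simp only []
    rw [edist_affine _ _ _ _ hγ0, ENNReal.mul_rpow_of_nonneg _ _ hp0]
  rw [hint]
  calc ∑ a : A, ∑ s' : S, (pol s a * Pk s a s') *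
          (ENNReal.ofReal γ ^ p * ∫⁻ q, edist q.1 q.2 ^ p ∂(π s'))
      ≤ ∑ a : A, ∑ s' : S, (pol s a * Pk s a s') * (ENNReal.ofReal γ ^ p * B) := by
        refine Finset.sum_le_sum fun a _ => Finset.sum_le_sum fun s' _ => ?_
        exact mul_le_mul_right (mul_le_mul_right (hB s') _) _
    _ = ENNReal.ofReal γ ^ p * B := by
        simp_rw [← Finset.sum_mul, ← Finset.mul_sum, hPk s, mul_one, hpol s, one_mul]

end BellmanAux

/-- The distributional Bellman operator is a γ-contraction in the supremum
p-Wasserstein metric. -/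
theorem bellman_contraction {S A : Type*} [Fintype S] [Fintype A]
    [Nonempty S] [Nonempty A]
    (pol : S → A → ℝ≥0∞) (hpol : ∀ s, ∑ a : A, pol s a = 1)
    (Pk : S → A → S → ℝ≥0∞) (hPk : ∀ s a, ∑ s' : S, Pk s a s' = 1)
    (r : S → A → ℝ) (γ : ℝ) (hγ0 : 0 ≤ γ) (hγ1 : γ < 1)
    (p : ℝ) (hp : 1 ≤ p)
    (Zθ Zθ' : S → MeasureTheory.Measure ℝ)
    (hZθ : ∀ s, IsProbabilityMeasure (Zθ s)) (hZθ' : ∀ s, IsProbabilityMeasure (Zθ' s))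
    (hZθm : ∀ s, ∫⁻ x, (‖x‖₊ : ℝ≥0∞) ^ p ∂(Zθ s) < ∞)
    (hZθ'm : ∀ s, ∫⁻ x, (‖x‖₊ : ℝ≥0∞) ^ p ∂(Zθ' s) < ∞) :
    WpBar S p (bellman pol Pk r γ Zθ) (bellman pol Pk r γ Zθ')
      ≤ ENNReal.ofReal γ * WpBar S p Zθ Zθ' := by
  classical
  have hp0 : (0 : ℝ) < p := lt_of_lt_of_le one_pos hp
  set γe := ENNReal.ofReal γ with hγe
  set I : S → ℝ≥0∞ := fun s' => ⨅ π ∈ {π : Measure (ℝ × ℝ) |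
      π.map Prod.fst = Zθ s' ∧ π.map Prod.snd = Zθ' s'},
      ∫⁻ q, (edist q.1 q.2) ^ p ∂π with hI
  set B : ℝ≥0∞ := ⨆ s', I s' with hBdef
  -- choice of couplings up to ε, giving the key bound on the Bellman-level cost
  have claim : ∀ s, ∀ ε : ℝ≥0∞, 0 < ε →
      (⨅ π ∈ {π : Measure (ℝ × ℝ) |
        π.map Prod.fst = bellman pol Pk r γ Zθ s ∧
        π.map Prod.snd = bellman pol Pk r γ Zθ' s},
        ∫⁻ q, (edist q.1 q.2) ^ p ∂π) ≤ γe ^ p * (B + ε) := by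
    intro s ε hε
    have hchoice : ∀ s', ∃ π : Measure (ℝ × ℝ),
        (π.map Prod.fst = Zθ s' ∧ π.map Prod.snd = Zθ' s') ∧
        ∫⁻ q, edist q.1 q.2 ^ p ∂π ≤ B + ε := by
      intro s'
      rcases eq_top_or_lt_top (I s') with htop | hfin
      · refine ⟨(Zθ s').prod (Zθ' s'), ⟨?_, ?_⟩, ?_⟩
        · rw [Measure.map_fst_prod, measure_univ, one_smul]
        · rw [Measure.map_snd_prod, measure_univ, one_smul]
        · have : B = ⊤ := top_unique (htop ▸ le_iSup I s')
          rw [this]; simp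
      · have hlt : I s' < I s' + ε := ENNReal.lt_add_right hfin.ne hε.ne'
        rw [hI] at hlt
        simp only [iInf_lt_iff] at hlt
        obtain ⟨π, hmem, hπ⟩ := hlt
        exact ⟨π, hmem, hπ.le.trans (add_le_add_left (le_iSup I s') ε)⟩
    choose π hπmem hπle using hchoice
    exact BellmanAux.key pol hpol Pk hPk r γ hγ0 p hp0.le Zθ Zθ' s π
      (fun s' => (hπmem s').1) (fun s' => (hπmem s').2) (B + ε) hπle
  have hIT : ∀ s, (⨅ π ∈ {π : Measure (ℝ × ℝ) |
      π.map Prod.fst = bellman pol Pk r γ Zθ s ∧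
      π.map Prod.snd = bellman pol Pk r γ Zθ' s},
      ∫⁻ q, (edist q.1 q.2) ^ p ∂π) ≤ γe ^ p * B := by
    intro s
    refine ENNReal.le_of_forall_pos_le_add fun ε hε _ => ?_
    by_cases h0 : γe = 0
    · have h := claim s 1 one_pos
      rw [h0, ENNReal.zero_rpow_of_pos hp0, zero_mul] at h ⊢
      exact le_trans h (by positivity)
    · have htop : γe ^ p ≠ ⊤ := ENNReal.rpow_ne_top_of_nonneg hp0.le ENNReal.ofReal_ne_top
      have hne : γe ^ p ≠ 0 :=
        (ENNReal.rpow_pos (pos_iff_ne_zero.mpr h0) ENNReal.ofReal_ne_top).ne'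
      have hδ : (0 : ℝ≥0∞) < (ε : ℝ≥0∞) / γe ^ p :=
        ENNReal.div_pos (by exact_mod_cast hε.ne') htop
      calc (⨅ π ∈ {π : Measure (ℝ × ℝ) |
            π.map Prod.fst = bellman pol Pk r γ Zθ s ∧
            π.map Prod.snd = bellman pol Pk r γ Zθ' s},
            ∫⁻ q, (edist q.1 q.2) ^ p ∂π)
          ≤ γe ^ p * (B + (ε : ℝ≥0∞) / γe ^ p) := claim s _ hδ
        _ = γe ^ p * B + γe ^ p * ((ε : ℝ≥0∞) / γe ^ p) := mul_add _ _ _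
        _ = γe ^ p * B + ε := by rw [ENNReal.mul_div_cancel hne htop]
  rw [WpBar]
  refine iSup_le fun s => ?_
  have h1 : Wp p (bellman pol Pk r γ Zθ s) (bellman pol Pk r γ Zθ' s)
      ≤ (γe ^ p * B) ^ (1 / p) :=
    ENNReal.rpow_le_rpow (hIT s) (by positivity)
  refine h1.trans ?_
  rw [ENNReal.mul_rpow_of_nonneg _ _ (by positivity), ← ENNReal.rpow_mul,
    mul_one_div_cancel hp0.ne', ENNReal.rpow_one]
  refine mul_le_mul_right ?_ γe
  have hsup : B ^ (1 / p) = ⨆ s', (I s') ^ (1 / p) := by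
    have h2 := OrderIso.map_iSup (ENNReal.orderIsoRpow (1 / p) (by positivity)) I
    simp only [ENNReal.orderIsoRpow_apply] at h2
    rw [hBdef]
    exact h2
  rw [hsup, WpBar]
  exact iSup_mono fun s' => le_of_eq rfl
end

section
/- Suppose a contraction mapping T on a complete metric space (M, d) with contraction factor γ ∈ [0,1) has fixed point p*, and a sequence (p_t) satisfies d(p_{t+1}, T p_t) ≤ ε_{t+1} with ε_{t+1} ≤ ε_max for all t. Then limsup_{t→∞} d(p_t, p*) ≤ ε_max/(1−γ). -/
/-- Approximate fixed-point iteration for a γ-contraction on a complete metric space: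
if each step incurs at most `εmax` error, the iterates converge to a neighborhood of
the fixed point of radius `εmax / (1 - γ)`. -/
theorem approximate_contraction_iteration {M : Type*} [MetricSpace M] [CompleteSpace M]
    (T : M → M) (γ : ℝ) (hγ0 : 0 ≤ γ) (hγ1 : γ < 1)
    (hT : ∀ x y : M, dist (T x) (T y) ≤ γ * dist x y)
    (pstar : M) (hfix : T pstar = pstar)
    (p : ℕ → M) (ε : ℕ → ℝ) (εmax : ℝ)
    (hstep : ∀ t : ℕ, dist (p (t + 1)) (T (p t)) ≤ ε (t + 1))
    (hbound : ∀ t : ℕ, ε (t + 1) ≤ εmax) :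
    Filter.limsup (fun t => dist (p t) pstar) Filter.atTop ≤ εmax / (1 - γ) := by
  have h1γ : (0:ℝ) < 1 - γ := by linarith
  have hεmax : 0 ≤ εmax := le_trans (le_trans dist_nonneg (hstep 0)) (hbound 0)
  set E := εmax / (1 - γ) with hE
  have hEnn : 0 ≤ E := div_nonneg hεmax h1γ.le
  set d0 := dist (p 0) pstar with hd0
  have key : ∀ t, dist (p t) pstar ≤ γ ^ t * d0 + E := by
    intro t
    induction t with
    | zero => simpa [hd0] using hEnn
    | succ n ih =>
      have h1 : dist (p (n+1)) pstar ≤ dist (p (n+1)) (T (p n)) + dist (T (p n)) pstar :=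
        dist_triangle _ _ _
      have h2 : dist (T (p n)) pstar ≤ γ * dist (p n) pstar := by
        calc dist (T (p n)) pstar = dist (T (p n)) (T pstar) := by rw [hfix]
          _ ≤ γ * dist (p n) pstar := hT _ _
      have h3 : γ * dist (p n) pstar ≤ γ * (γ ^ n * d0 + E) :=
        mul_le_mul_of_nonneg_left ih hγ0
      have hE' : εmax + γ * E ≤ E := by
        have : εmax = (1 - γ) * E := by rw [hE]; exact (mul_div_cancel₀ εmax h1γ.ne').symm
        nlinarith
      calc dist (p (n+1)) pstar
          ≤ dist (p (n+1)) (T (p n)) + dist (T (p n)) pstar := h1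
        _ ≤ εmax + γ * (γ ^ n * d0 + E) := by
            have := le_trans (hstep n) (hbound n); linarith
        _ = γ ^ (n+1) * d0 + (εmax + γ * E) := by ring
        _ ≤ γ ^ (n+1) * d0 + E := by linarith
  have htend : Filter.Tendsto (fun t : ℕ => γ ^ t * d0 + E) Filter.atTop (nhds E) := by
    have h0 : Filter.Tendsto (fun t : ℕ => γ ^ t) Filter.atTop (nhds 0) :=
      tendsto_pow_atTop_nhds_zero_of_lt_one hγ0 hγ1
    have := (h0.mul_const d0).add_const E
    simpa using this
  have hls : Filter.limsup (fun t : ℕ => γ ^ t * d0 + E) Filter.atTop = E :=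
    htend.limsup_eq
  calc Filter.limsup (fun t => dist (p t) pstar) Filter.atTop
      ≤ Filter.limsup (fun t : ℕ => γ ^ t * d0 + E) Filter.atTop := by
        exact Filter.limsup_le_limsup (Filter.Eventually.of_forall key)
          (Filter.isCoboundedUnder_le_of_le Filter.atTop (fun t => dist_nonneg))
          htend.isBoundedUnder_le
    _ = E := hls
end

section
/- Let κ_1, …, κ_N be nonnegative reals, not all equal, and define φ(α) = (Σ_i e^{−2ακ_i} κ_i²)/(Σ_j e^{−ακ_j})² − (1/N²) Σ_i κ_i². Then φ(0) = 0 and φ'(0) = (2/N³)·((Σ_i κ_i²)(Σ_j κ_j) − N Σ_i κ_i³) < 0. -/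
/-- The difference `φ` between the variance of the exponentially-weighted gradient
estimator and the unweighted one vanishes at `α = 0` and has strictly negative
derivative there. -/
theorem weighted_variance_derivative_neg (N : ℕ) (hN : 0 < N) (κ : Fin N → ℝ)
    (hκ : ∀ i, 0 ≤ κ i) (hne : ∃ i j, κ i ≠ κ j)
    (φ : ℝ → ℝ)
    (hφ : φ = fun α => (∑ i, Real.exp (-2 * α * κ i) * κ i ^ 2) /
        (∑ j, Real.exp (-α * κ j)) ^ 2 - (1 / (N : ℝ) ^ 2) * ∑ i, κ i ^ 2) :
    φ 0 = 0 ∧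
    HasDerivAt φ ((2 / (N : ℝ) ^ 3) *
        ((∑ i, κ i ^ 2) * (∑ j, κ j) - (N : ℝ) * ∑ i, κ i ^ 3)) 0 ∧
    (2 / (N : ℝ) ^ 3) * ((∑ i, κ i ^ 2) * (∑ j, κ j) - (N : ℝ) * ∑ i, κ i ^ 3) < 0 := by
  have hNR : (0:ℝ) < (N:ℝ) := by exact_mod_cast hN
  have hNne : (N:ℝ) ≠ 0 := ne_of_gt hNR
  -- part 1
  have h0 : φ 0 = 0 := by
    subst hφ
    simp only [mul_zero, zero_mul, neg_zero, Real.exp_zero, one_mul,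
      Finset.sum_const, Finset.card_univ, Fintype.card_fin, nsmul_eq_mul, mul_one]
    field_simp
    ring
  -- derivatives of numerator and denominator
  have hf : HasDerivAt (fun α : ℝ => ∑ i, Real.exp (-2 * α * κ i) * κ i ^ 2)
      (∑ i, Real.exp (-2 * 0 * κ i) * (-2 * κ i) * κ i ^ 2) 0 := by
    apply HasDerivAt.fun_sum
    intro i _
    have h1 : HasDerivAt (fun α : ℝ => -2 * α * κ i) (-2 * κ i) 0 := by
      have h := (hasDerivAt_id (0:ℝ)).const_mul (-2 * κ i)
      simp only [id_eq, mul_one] at h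
      have heq : (fun α : ℝ => -2 * α * κ i) = fun α : ℝ => -2 * κ i * α := by
        funext α; ring
      rw [heq]; exact h
    exact (h1.exp).mul_const _
  have hg : HasDerivAt (fun α : ℝ => ∑ j, Real.exp (-α * κ j))
      (∑ j, Real.exp (-0 * κ j) * (-κ j)) 0 := by
    apply HasDerivAt.fun_sum
    intro j _
    have h1 : HasDerivAt (fun α : ℝ => -α * κ j) (-κ j) 0 := by
      have h := (hasDerivAt_id (0:ℝ)).const_mul (-κ j)
      simp only [id_eq, mul_one] at h
      have heq : (fun α : ℝ => -α * κ j) = fun α : ℝ => -κ j * α := by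
        funext α; ring
      rw [heq]; exact h
    exact h1.exp
  have hg0 : (∑ j, Real.exp (-(0:ℝ) * κ j)) = (N:ℝ) := by
    simp
  have hgsq : HasDerivAt (fun α : ℝ => (∑ j, Real.exp (-α * κ j)) ^ 2)
      (2 * (∑ j, Real.exp (-(0:ℝ) * κ j)) ^ 1 * (∑ j, Real.exp (-0 * κ j) * (-κ j))) 0 := by
    simpa using hg.fun_pow 2
  have hgsq0 : ((∑ j, Real.exp (-(0:ℝ) * κ j)) ^ 2) ≠ 0 := by
    rw [hg0]; positivity
  have hdiv := (hf.div hgsq hgsq0).sub_const ((1 / (N : ℝ) ^ 2) * ∑ i, κ i ^ 2)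
  have hder : HasDerivAt φ ((2 / (N : ℝ) ^ 3) *
      ((∑ i, κ i ^ 2) * (∑ j, κ j) - (N : ℝ) * ∑ i, κ i ^ 3)) 0 := by
    rw [hφ]
    refine hdiv.congr_deriv ?_
    have e1 : (∑ i, Real.exp (-2 * (0:ℝ) * κ i) * (-2 * κ i) * κ i ^ 2)
        = -2 * ∑ i, κ i ^ 3 := by
      rw [Finset.mul_sum]
      apply Finset.sum_congr rfl
      intro i _
      simp [Real.exp_zero]; ring
    have e2 : (∑ i, Real.exp (-2 * (0:ℝ) * κ i) * κ i ^ 2) = ∑ i, κ i ^ 2 := by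
      apply Finset.sum_congr rfl
      intro i _
      simp
    have e3 : (∑ j, Real.exp (-(0:ℝ) * κ j) * (-κ j)) = -∑ j, κ j := by
      rw [← Finset.sum_neg_distrib]
      apply Finset.sum_congr rfl
      intro j _
      simp
    rw [e1, e2, e3, hg0]
    field_simp
    ring
  -- part 3
  set S1 := ∑ j, κ j with hS1
  set S2 := ∑ i, κ i ^ 2 with hS2
  set S3 := ∑ i, κ i ^ 3 with hS3
  have hT : (∑ i, ∑ j, (κ i - κ j) ^ 2 * (κ i + κ j)) = 2 * ((N:ℝ) * S3 - S2 * S1) := by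
    have h : ∀ i j : Fin N, (κ i - κ j) ^ 2 * (κ i + κ j)
        = κ i ^ 3 + κ j ^ 3 - κ i ^ 2 * κ j - κ i * κ j ^ 2 := by
      intro i j; ring
    have hinner : ∀ i : Fin N, (∑ j, (κ i - κ j) ^ 2 * (κ i + κ j))
        = (N:ℝ) * κ i ^ 3 + S3 - κ i ^ 2 * S1 - κ i * S2 := by
      intro i
      have : (∑ j, (κ i - κ j) ^ 2 * (κ i + κ j))
          = ∑ j, (κ i ^ 3 + κ j ^ 3 - κ i ^ 2 * κ j - κ i * κ j ^ 2) :=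
        Finset.sum_congr rfl fun j _ => h i j
      rw [this, Finset.sum_sub_distrib, Finset.sum_sub_distrib, Finset.sum_add_distrib,
        Finset.sum_const, ← Finset.mul_sum, ← Finset.mul_sum, Finset.card_univ,
        Fintype.card_fin, nsmul_eq_mul, ← hS1, ← hS2, ← hS3]
    rw [Finset.sum_congr rfl fun i _ => hinner i]
    rw [Finset.sum_sub_distrib, Finset.sum_sub_distrib, Finset.sum_add_distrib,
      Finset.sum_const, ← Finset.mul_sum, ← Finset.sum_mul, ← Finset.sum_mul,
      Finset.card_univ, Fintype.card_fin, nsmul_eq_mul, ← hS1, ← hS2, ← hS3]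
    ring
  have hTpos : 0 < ∑ i, ∑ j, (κ i - κ j) ^ 2 * (κ i + κ j) := by
    obtain ⟨i, j, hij⟩ := hne
    have key : 0 < (κ i - κ j) ^ 2 * (κ i + κ j) := by
      have h1 : 0 < (κ i - κ j) ^ 2 := by
        have : κ i - κ j ≠ 0 := sub_ne_zero.mpr hij
        positivity
      have h2 : 0 < κ i + κ j := by
        rcases lt_or_eq_of_le (add_nonneg (hκ i) (hκ j)) with h | h
        · exact h
        · exfalso
          have := (add_eq_zero_iff_of_nonneg (hκ i) (hκ j)).mp h.symm
          exact hij (this.1.trans this.2.symm)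
      exact mul_pos h1 h2
    have hnn : ∀ a b : Fin N, 0 ≤ (κ a - κ b) ^ 2 * (κ a + κ b) := fun a b =>
      mul_nonneg (sq_nonneg _) (add_nonneg (hκ a) (hκ b))
    exact Finset.sum_pos' (fun a _ => Finset.sum_nonneg fun b _ => hnn a b)
      ⟨i, Finset.mem_univ i, Finset.sum_pos' (fun b _ => hnn i b)
        ⟨j, Finset.mem_univ j, key⟩⟩
  have hneg : S2 * S1 - (N:ℝ) * S3 < 0 := by
    nlinarith [hT, hTpos]
  refine ⟨h0, hder, ?_⟩
  have hpos : (0:ℝ) < 2 / (N:ℝ) ^ 3 := by positivity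
  exact mul_neg_of_pos_of_neg hpos hneg
end

section
/- Let κ_1, …, κ_N be nonnegative reals, not all equal. Then there exists α > 0 such that (Σ_i e^{−2ακ_i} κ_i²)/(Σ_j e^{−ακ_j})² < (1/N²) Σ_i κ_i². In other words, exponential down-weighting of high-κ samples strictly reduces the variance of the averaged estimator for some positive temperature α. -/
open Finset Real

/-- Variance reduction via CoV weighting: for nonnegative `κᵢ` not all equal, there is
a temperature `α > 0` at which the exponentially-weighted estimator has strictly
smaller variance than the uniform average. -/
theorem exists_variance_reducing_temperature (N : ℕ) (hN : 0 < N) (κ : Fin N → ℝ)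
    (hκ : ∀ i, 0 ≤ κ i) (hne : ∃ i j, κ i ≠ κ j) :
    ∃ α : ℝ, 0 < α ∧
      (∑ i, Real.exp (-2 * α * κ i) * κ i ^ 2) / (∑ j, Real.exp (-α * κ j)) ^ 2
        < (1 / (N : ℝ) ^ 2) * ∑ i, κ i ^ 2 := by
  set S : ℝ := ∑ i, κ i ^ 2 with hS
  have key : (∑ i, κ i) * S < (N : ℝ) * ∑ i, κ i * κ i ^ 2 := by
    have hterm : ∀ i j : Fin N, (κ i - κ j) * (κ i ^ 2 - κ j ^ 2)
        = (κ i - κ j) ^ 2 * (κ i + κ j) := by intro i j; ring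
    have hnn : ∀ i j : Fin N, 0 ≤ (κ i - κ j) * (κ i ^ 2 - κ j ^ 2) := by
      intro i j; rw [hterm]
      exact mul_nonneg (sq_nonneg _) (add_nonneg (hκ i) (hκ j))
    obtain ⟨i₀, j₀, hij⟩ := hne
    have hpos0 : 0 < (κ i₀ - κ j₀) * (κ i₀ ^ 2 - κ j₀ ^ 2) := by
      rw [hterm]
      have hd : κ i₀ - κ j₀ ≠ 0 := sub_ne_zero.mpr hij
      have h2 : 0 < κ i₀ + κ j₀ := by
        by_contra h
        push_neg at h
        have h1 : κ i₀ = 0 := le_antisymm (by linarith [hκ j₀]) (hκ i₀)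
        have h2' : κ j₀ = 0 := le_antisymm (by linarith [hκ i₀]) (hκ j₀)
        exact hij (h1.trans h2'.symm)
      positivity
    have hpos : 0 < ∑ i, ∑ j, (κ i - κ j) * (κ i ^ 2 - κ j ^ 2) := by
      have hi0 : 0 < ∑ j, (κ i₀ - κ j) * (κ i₀ ^ 2 - κ j ^ 2) :=
        Finset.sum_pos' (fun j _ => hnn i₀ j) ⟨j₀, Finset.mem_univ _, hpos0⟩
      exact Finset.sum_pos'
        (fun i _ => Finset.sum_nonneg fun j _ => hnn i j)
        ⟨i₀, Finset.mem_univ _, hi0⟩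
    have hexp : ∑ i, ∑ j, (κ i - κ j) * (κ i ^ 2 - κ j ^ 2)
        = 2 * ((N : ℝ) * ∑ i, κ i * κ i ^ 2) - 2 * ((∑ i, κ i) * S) := by
      have h1 : ∀ i : Fin N, ∑ j, (κ i - κ j) * (κ i ^ 2 - κ j ^ 2)
          = (N : ℝ) * (κ i * κ i ^ 2) - κ i * S - κ i ^ 2 * (∑ j, κ j)
            + ∑ j, κ j * κ j ^ 2 := by
        intro i
        have h2 : ∀ j : Fin N, (κ i - κ j) * (κ i ^ 2 - κ j ^ 2)
            = κ i * κ i ^ 2 - κ i * κ j ^ 2 - κ i ^ 2 * κ j + κ j * κ j ^ 2 := by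
          intro j; ring
        rw [Finset.sum_congr rfl fun j _ => h2 j]
        simp only [Finset.sum_add_distrib, Finset.sum_sub_distrib, ← Finset.mul_sum,
          Finset.sum_const, Finset.card_univ, Fintype.card_fin, nsmul_eq_mul, hS]
        ring
      rw [Finset.sum_congr rfl fun i _ => h1 i]
      simp only [Finset.sum_add_distrib, Finset.sum_sub_distrib, ← Finset.mul_sum,
        ← Finset.sum_mul, Finset.sum_const, Finset.card_univ, Fintype.card_fin,
        nsmul_eq_mul]
      ring
    linarith [hexp ▸ hpos]
  set g : ℝ → ℝ := fun α =>
    (N : ℝ) ^ 2 * (∑ i, Real.exp (-2 * α * κ i) * κ i ^ 2)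
      - (∑ j, Real.exp (-α * κ j)) ^ 2 * S with hg
  have hg0 : g 0 = 0 := by
    simp [hg, Finset.card_univ]
    rw [hS]; ring
  have hF : HasDerivAt (fun α => ∑ i, Real.exp (-2 * α * κ i) * κ i ^ 2)
      (∑ i, (-2 * κ i) * κ i ^ 2) 0 := by
    apply HasDerivAt.fun_sum
    intro i _
    have hlin : HasDerivAt (fun α : ℝ => -2 * α * κ i) (-2 * κ i) 0 := by
      have h := (hasDerivAt_id (0 : ℝ)).const_mul (-2 * κ i)
      simp only [mul_one] at h
      convert h using 1
      · rfl
      · rfl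
      funext α; simp only [id_eq]; ring
    have := (hlin.exp).mul_const (κ i ^ 2)
    simpa using this
  have hG : HasDerivAt (fun α => ∑ j, Real.exp (-α * κ j)) (∑ j, -κ j) 0 := by
    apply HasDerivAt.fun_sum
    intro j _
    have hlin : HasDerivAt (fun α : ℝ => -α * κ j) (-κ j) 0 := by
      have h := (hasDerivAt_id (0 : ℝ)).const_mul (-κ j)
      simp only [mul_one] at h
      convert h using 1
      · rfl
      · rfl
      funext α; simp only [id_eq]; ring
    simpa using hlin.exp
  have hGd : HasDerivAt g
      ((N : ℝ) ^ 2 * (∑ i, (-2 * κ i) * κ i ^ 2)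
        - (2 * (∑ j, Real.exp (-(0:ℝ) * κ j)) * (∑ j, -κ j)) * S) 0 := by
    have h1 := hF.const_mul ((N : ℝ) ^ 2)
    have h2 := (hG.pow 2).mul_const S
    have h3 := h1.sub h2
    convert h3 using 1
    · rfl
    · rfl
    · rfl
    simp
  have hderiv_neg : ((N : ℝ) ^ 2 * (∑ i, (-2 * κ i) * κ i ^ 2)
        - (2 * (∑ j, Real.exp (-(0:ℝ) * κ j)) * (∑ j, -κ j)) * S) < 0 := by
    have hsum0 : (∑ j : Fin N, Real.exp (-(0:ℝ) * κ j)) = (N : ℝ) := by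
      simp [Finset.card_univ]
    rw [hsum0]
    have h1 : (∑ i, (-2 * κ i) * κ i ^ 2) = -2 * ∑ i, κ i * κ i ^ 2 := by
      rw [Finset.mul_sum]; exact Finset.sum_congr rfl fun i _ => by ring
    have h2 : (∑ j : Fin N, -κ j) = -∑ j, κ j := by simp
    rw [h1, h2]
    have hNpos : (0 : ℝ) < N := by exact_mod_cast hN
    nlinarith [key]
  have hslope := hasDerivAt_iff_tendsto_slope.mp hGd
  have hev : ∀ᶠ α in nhdsWithin (0:ℝ) (Set.Ioi 0), g α < 0 := by
    have hle : nhdsWithin (0:ℝ) (Set.Ioi 0) ≤ nhdsWithin (0:ℝ) {(0:ℝ)}ᶜ :=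
      nhdsWithin_mono _ fun x hx => ne_of_gt hx
    have hs : ∀ᶠ α in nhdsWithin (0:ℝ) {(0:ℝ)}ᶜ, slope g 0 α < 0 :=
      hslope.eventually_lt_const hderiv_neg
    have hs' := hle hs
    filter_upwards [hs', self_mem_nhdsWithin] with α hα hα'
    have hαpos : (0:ℝ) < α := hα'
    rw [slope_def_field, hg0] at hα
    have hdiv : (g α - 0) / (α - 0) < 0 := hα
    rw [sub_zero, sub_zero] at hdiv
    exact lt_of_not_ge fun h => absurd (div_nonneg h hαpos.le) (not_le.mpr hdiv)
  obtain ⟨α, hα, hαpos⟩ := (hev.and self_mem_nhdsWithin).exists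
  refine ⟨α, hαpos, ?_⟩
  have hGpos : 0 < ∑ j, Real.exp (-α * κ j) :=
    Finset.sum_pos (fun j _ => Real.exp_pos _) ⟨⟨0, hN⟩, Finset.mem_univ _⟩
  have hNpos : (0 : ℝ) < N := by exact_mod_cast hN
  have hR : (1 / (N : ℝ) ^ 2) * S = S / (N : ℝ) ^ 2 := by ring
  rw [hR, div_lt_div_iff₀ (pow_pos hGpos 2) (by positivity)]
  have hα' : (N : ℝ) ^ 2 * (∑ i, Real.exp (-2 * α * κ i) * κ i ^ 2)
      - (∑ j, Real.exp (-α * κ j)) ^ 2 * S < 0 := hα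
  linarith [hα']
end

section
/- For a Markov reward process with finite state space, bounded rewards, and discount γ ∈ [0,1), the distributional Bellman operator T^π has a unique fixed point p^π in the space of conditional return distributions with finite p-th moments equipped with the supremum p-Wasserstein metric, and T^π p^π = p^π. -/
open MeasureTheory ENNReal

open NNReal Set Filter Topology

section Aux
variable {S A : Type*} [Fintype S] [Fintype A]
variable {pol : S → A → ℝ≥0∞} {Pk : S → A → S → ℝ≥0∞} {r : S → A → ℝ} {γ : ℝ}

lemma measurable_aff (c γ : ℝ) : Measurable (fun z : ℝ => c + γ * z) := by fun_prop

lemma coef_le_one (hpol : ∀ s, ∑ a : A, pol s a = 1) (hPk : ∀ s a, ∑ s' : S, Pk s a s' = 1)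
    (s : S) (a : A) (s' : S) : pol s a * Pk s a s' ≤ 1 := by
  have h1 : pol s a ≤ 1 := (hpol s) ▸ Finset.single_le_sum (fun _ _ => zero_le) (Finset.mem_univ a)
  have h2 : Pk s a s' ≤ 1 := (hPk s a) ▸ Finset.single_le_sum (fun _ _ => zero_le) (Finset.mem_univ s')
  exact mul_le_one' h1 h2

lemma coef_ne_top (hpol : ∀ s, ∑ a : A, pol s a = 1) (hPk : ∀ s a, ∑ s' : S, Pk s a s' = 1)
    (s : S) (a : A) (s' : S) : pol s a * Pk s a s' ≠ ∞ :=
  ne_top_of_le_ne_top one_ne_top (coef_le_one hpol hPk s a s')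

lemma bellman_apply (Z : S → Measure ℝ) (s : S) {E : Set ℝ} (hE : MeasurableSet E) :
    bellman pol Pk r γ Z s E
      = ∑ a : A, ∑ s' : S, (pol s a * Pk s a s') * Z s' ((fun z => r s a + γ * z) ⁻¹' E) := by
  rw [bellman, Measure.finset_sum_apply]
  refine Finset.sum_congr rfl fun a _ => ?_
  rw [Measure.finset_sum_apply]
  refine Finset.sum_congr rfl fun s' _ => ?_
  rw [Measure.smul_apply, Measure.map_apply (measurable_aff _ _) hE, smul_eq_mul]

lemma bellman_univ (hpol : ∀ s, ∑ a : A, pol s a = 1) (hPk : ∀ s a, ∑ s' : S, Pk s a s' = 1)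
    (Z : S → Measure ℝ) (hZ : ∀ s, IsProbabilityMeasure (Z s)) (s : S) :
    bellman pol Pk r γ Z s univ = 1 := by
  rw [bellman_apply Z s MeasurableSet.univ]
  have : ∀ a s', Z s' ((fun z => r s a + γ * z) ⁻¹' univ) = 1 := by
    intro a s'; simp [(hZ s').measure_univ]
  simp_rw [this, mul_one]
  simp_rw [← Finset.mul_sum, hPk, mul_one, hpol]

end Aux

section Aux2
variable {S A : Type*} [Fintype S] [Fintype A]
variable {pol : S → A → ℝ≥0∞} {Pk : S → A → S → ℝ≥0∞} {r : S → A → ℝ} {γ : ℝ}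

lemma bellman_prob (hpol : ∀ s, ∑ a : A, pol s a = 1) (hPk : ∀ s a, ∑ s' : S, Pk s a s' = 1)
    (Z : S → Measure ℝ) (hZ : ∀ s, IsProbabilityMeasure (Z s)) (s : S) :
    IsProbabilityMeasure (bellman pol Pk r γ Z s) :=
  ⟨bellman_univ hpol hPk Z hZ s⟩

lemma coef_toReal_sum (hpol : ∀ s, ∑ a : A, pol s a = 1) (hPk : ∀ s a, ∑ s' : S, Pk s a s' = 1)
    (s : S) : ∑ a : A, ∑ s' : S, (pol s a * Pk s a s').toReal = 1 := by
  have : ∀ a : A, ∑ s' : S, (pol s a * Pk s a s').toReal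
      = ((pol s a) * ∑ s' : S, Pk s a s').toReal := by
    intro a
    rw [Finset.mul_sum, ENNReal.toReal_sum]
    exact fun s' _ => coef_ne_top hpol hPk s a s'
  simp_rw [this, hPk, mul_one]
  rw [← ENNReal.toReal_sum (fun a _ => ne_top_of_le_ne_top one_ne_top
    ((hpol s) ▸ Finset.single_le_sum (fun _ _ => zero_le) (Finset.mem_univ a))), hpol]
  simp

lemma preimage_aff_Iic (hγ : 0 < γ) (c t : ℝ) :
    (fun z : ℝ => c + γ * z) ⁻¹' (Iic t) = Iic ((t - c) / γ) := by
  ext z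
  simp only [mem_preimage, mem_Iic, le_div_iff₀ hγ]
  constructor <;> intro h <;> linarith

lemma bellman_Iic (hγ : 0 < γ) (Z : S → Measure ℝ) (s : S) (t : ℝ) :
    bellman pol Pk r γ Z s (Iic t)
      = ∑ a : A, ∑ s' : S, (pol s a * Pk s a s') * Z s' (Iic ((t - r s a) / γ)) := by
  rw [bellman_apply Z s measurableSet_Iic]
  simp_rw [preimage_aff_Iic hγ]

end Aux2

section Exist
variable {S A : Type*} [Fintype S] [Fintype A]
variable {pol : S → A → ℝ≥0∞} {Pk : S → A → S → ℝ≥0∞} {r : S → A → ℝ} {γ : ℝ}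

lemma exists_fixed (hpol : ∀ s, ∑ a : A, pol s a = 1) (hPk : ∀ s a, ∑ s' : S, Pk s a s' = 1)
    (hγ0 : 0 < γ) (hγ1 : γ < 1) (R : ℝ) (hR0 : 0 ≤ R)
    (hR : ∀ s a, |r s a| + γ * R ≤ R) :
    ∃ pπ : S → Measure ℝ, (∀ s, IsProbabilityMeasure (pπ s)) ∧
      (∀ s, ∀ᵐ x ∂(pπ s), |x| ≤ R) ∧ bellman pol Pk r γ pπ = pπ := by
  classical
  set T : (S → Measure ℝ) → (S → Measure ℝ) := bellman pol Pk r γ with hT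
  set Z : ℕ → S → Measure ℝ := fun n => T^[n] (fun _ => Measure.dirac (-R)) with hZ
  have hZsucc : ∀ n, Z (n + 1) = T (Z n) := by
    intro n; simp only [hZ, Function.iterate_succ_apply']
  have hZprob : ∀ n s, IsProbabilityMeasure (Z n s) := by
    intro n
    induction n with
    | zero => intro s; simp only [hZ, Function.iterate_zero_apply]; infer_instance
    | succ n ih => intro s; rw [hZsucc]; exact bellman_prob hpol hPk _ ih s
  set F : ℕ → S → ℝ → ℝ := fun n s t => (Z n s (Iic t)).toReal with hF
  have hF0 : ∀ n s t, 0 ≤ F n s t := fun n s t => ENNReal.toReal_nonneg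
  have hF1 : ∀ n s t, F n s t ≤ 1 := by
    intro n s t
    have := hZprob n s
    exact ENNReal.toReal_le_of_le_ofReal one_pos.le (by simpa using prob_le_one)
  have hFne : ∀ n s t, Z n s (Iic t) ≠ ∞ := by
    intro n s t; have := hZprob n s; exact measure_ne_top _ _
  have hrec : ∀ n s t, F (n + 1) s t
      = ∑ a : A, ∑ s' : S, (pol s a * Pk s a s').toReal * F n s' ((t - r s a) / γ) := by
    intro n s t
    have : Z (n+1) s (Iic t)
        = ∑ a : A, ∑ s' : S, (pol s a * Pk s a s') * Z n s' (Iic ((t - r s a) / γ)) := by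
      rw [hZsucc]; exact bellman_Iic hγ0 (Z n) s t
    rw [hF]
    simp only [this]
    rw [ENNReal.toReal_sum]
    · refine Finset.sum_congr rfl fun a _ => ?_
      rw [ENNReal.toReal_sum]
      · exact Finset.sum_congr rfl fun s' _ => ENNReal.toReal_mul
      · intro s' _
        exact ENNReal.mul_ne_top (coef_ne_top hpol hPk s a s') (hFne n s' _)
    · intro a _
      exact (ENNReal.sum_lt_top.mpr (fun s' _ => lt_top_iff_ne_top.mpr
        (ENNReal.mul_ne_top (coef_ne_top hpol hPk s a s') (hFne n s' _)))).ne
  have hFmono : ∀ n s, Monotone (F n s) := by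
    intro n s t u htu
    exact ENNReal.toReal_mono (hFne n s u) (measure_mono (Iic_subset_Iic.mpr htu))
  -- argument bound facts
  have harg_lo : ∀ (s : S) (a : A) (t : ℝ), t < -R → (t - r s a) / γ < -R := by
    intro s a t ht
    rw [div_lt_iff₀ hγ0]
    have h1 := hR s a
    have h2 := neg_abs_le (r s a)
    nlinarith [abs_nonneg (r s a)]
  have harg_hi : ∀ (s : S) (a : A) (t : ℝ), R ≤ t → R ≤ (t - r s a) / γ := by
    intro s a t ht
    rw [le_div_iff₀ hγ0]
    have h1 := hR s a
    have h2 := le_abs_self (r s a)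
    linarith
  have hF0dirac : ∀ (s : S) (t : ℝ), t < -R → F 0 s t = 0 := by
    intro s t ht
    simp only [hF, hZ, Function.iterate_zero_apply]
    rw [Measure.dirac_apply' _ measurableSet_Iic]
    simp [Set.indicator_apply, not_le.mpr ht, mem_Iic]
  have hanti : ∀ s t, Antitone fun n => F n s t := by
    intro s t
    refine antitone_nat_of_succ_le ?_
    intro n
    induction n generalizing s t with
    | zero =>
      by_cases ht : t < -R
      · have h1 : F 1 s t = 0 := by
          rw [hrec 0 s t]
          refine Finset.sum_eq_zero fun a _ => Finset.sum_eq_zero fun s' _ => ?_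
          rw [hF0dirac s' _ (harg_lo s a t ht), mul_zero]
        rw [h1]; exact hF0 0 s t
      · have : F 0 s t = 1 := by
          simp only [hF, hZ, Function.iterate_zero_apply]
          rw [Measure.dirac_apply' _ measurableSet_Iic]
          simp [Set.indicator_apply, mem_Iic, le_of_not_gt ht]
        rw [this]; exact hF1 1 s t
    | succ n ih =>
      rw [hrec (n+1) s t, hrec n s t]
      refine Finset.sum_le_sum fun a _ => Finset.sum_le_sum fun s' _ => ?_
      exact mul_le_mul_of_nonneg_left (ih s' _) ENNReal.toReal_nonneg
  set Fl : S → ℝ → ℝ := fun s t => ⨅ n, F n s t with hFl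
  have hbdd : ∀ s t, BddBelow (Set.range fun n => F n s t) := by
    intro s t
    refine ⟨0, ?_⟩
    rintro x ⟨n, rfl⟩
    exact hF0 n s t
  have hFltend : ∀ s t, Tendsto (fun n => F n s t) atTop (𝓝 (Fl s t)) := by
    intro s t
    exact tendsto_atTop_ciInf (hanti s t) (hbdd s t)
  have hFl0 : ∀ s t, 0 ≤ Fl s t := fun s t => le_ciInf fun n => hF0 n s t
  have hFlmono : ∀ s, Monotone (Fl s) := by
    intro s t u htu
    exact le_ciInf fun n => (ciInf_le (hbdd s t) n).trans (hFmono n s htu)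
  have hFlrec : ∀ s t, Fl s t
      = ∑ a : A, ∑ s' : S, (pol s a * Pk s a s').toReal * Fl s' ((t - r s a) / γ) := by
    intro s t
    refine tendsto_nhds_unique ((hFltend s t).comp (tendsto_add_atTop_nat 1)) ?_
    have : (fun n => F n s t) ∘ (fun n => n + 1)
        = fun n => ∑ a : A, ∑ s' : S, (pol s a * Pk s a s').toReal * F n s' ((t - r s a) / γ) := by
      funext n; exact hrec n s t
    rw [this]
    exact tendsto_finset_sum _ fun a _ => tendsto_finset_sum _ fun s' _ =>
      ((hFltend s' _).const_mul _)
  have hFl_lo : ∀ s t, t < -R → Fl s t = 0 := by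
    intro s t ht
    exact le_antisymm ((ciInf_le (hbdd s t) 0).trans_eq (hF0dirac s t ht)) (hFl0 s t)
  have hFn1 : ∀ n s t, R ≤ t → F n s t = 1 := by
    intro n
    induction n with
    | zero =>
      intro s t ht
      simp only [hF, hZ, Function.iterate_zero_apply]
      rw [Measure.dirac_apply' _ measurableSet_Iic]
      have : -R ≤ t := by linarith
      simp [Set.indicator_apply, mem_Iic, this]
    | succ n ih =>
      intro s t ht
      rw [hrec n s t]
      have : ∀ a : A, ∀ s' : S, F n s' ((t - r s a) / γ) = 1 :=
        fun a s' => ih s' _ (harg_hi s a t ht)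
      simp_rw [this, mul_one]
      exact coef_toReal_sum hpol hPk s
  have hFl_hi : ∀ s t, R ≤ t → Fl s t = 1 := by
    intro s t ht
    refine le_antisymm ((ciInf_le (hbdd s t) 0).trans_eq (hFn1 0 s t ht)) ?_
    exact le_ciInf fun n => (hFn1 n s t ht).ge
  -- the Stieltjes regularization
  set G : S → StieltjesFunction ℝ := fun s => (hFlmono s).stieltjesFunction with hG
  have hGtend : ∀ s t, Tendsto (Fl s) (𝓝[>] t) (𝓝 (G s t)) := by
    intro s t
    have : G s t = Function.rightLim (Fl s) t := Monotone.stieltjesFunction_eq (hFlmono s) t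
    rw [this]
    exact ((hFlmono s).tendsto_rightLim t)
  have hGnonneg : ∀ s t, 0 ≤ G s t := by
    intro s t
    exact ge_of_tendsto (hGtend s t) (Eventually.of_forall fun u => hFl0 s u)
  have hG_lo : ∀ s t, t < -R → G s t = 0 := by
    intro s t ht
    refine le_antisymm ?_ (hGnonneg s t)
    have h1 : Tendsto (Fl s) (𝓝[>] t) (𝓝 0) := by
      refine tendsto_const_nhds.congr' ?_
      filter_upwards [Ioo_mem_nhdsGT_of_mem (by constructor <;> [exact le_refl t; exact ht] : t ∈ Ico t (-R))] with u hu
      exact (hFl_lo s u hu.2).symm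
    exact (tendsto_nhds_unique (hGtend s t) h1).le
  have hG_hi : ∀ s t, R ≤ t → G s t = 1 := by
    intro s t ht
    have h1 : Tendsto (Fl s) (𝓝[>] t) (𝓝 1) := by
      refine tendsto_const_nhds.congr' ?_
      filter_upwards [self_mem_nhdsWithin] with u hu
      exact (hFl_hi s u (ht.trans (le_of_lt hu))).symm
    exact tendsto_nhds_unique (hGtend s t) h1
  have hGrec : ∀ s t, G s t
      = ∑ a : A, ∑ s' : S, (pol s a * Pk s a s').toReal * G s' ((t - r s a) / γ) := by
    intro s t
    refine tendsto_nhds_unique (hGtend s t) ?_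
    have key : ∀ (a : A) (s' : S), Tendsto (fun u => Fl s' ((u - r s a) / γ)) (𝓝[>] t)
        (𝓝 (G s' ((t - r s a) / γ))) := by
      intro a s'
      refine (hGtend s' ((t - r s a) / γ)).comp ?_
      rw [tendsto_nhdsWithin_iff]
      constructor
      · have hc : Continuous fun u : ℝ => (u - r s a) / γ := by fun_prop
        exact (hc.tendsto t).mono_left nhdsWithin_le_nhds
      · filter_upwards [self_mem_nhdsWithin] with u hu
        have : t - r s a < u - r s a := by simpa using (hu : t < u)
        show (t - r s a) / γ < (u - r s a) / γ
        gcongr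
    have h2 : Tendsto (fun u => ∑ a : A, ∑ s' : S,
        (pol s a * Pk s a s').toReal * Fl s' ((u - r s a) / γ)) (𝓝[>] t)
        (𝓝 (∑ a : A, ∑ s' : S, (pol s a * Pk s a s').toReal * G s' ((t - r s a) / γ))) :=
      tendsto_finset_sum _ fun a _ => tendsto_finset_sum _ fun s' _ => ((key a s').const_mul _)
    exact h2.congr fun u => (hFlrec s u).symm
  -- the candidate measure
  have hGbot : ∀ s, Tendsto (G s) atBot (𝓝 0) := by
    intro s
    refine tendsto_const_nhds.congr' ?_
    filter_upwards [eventually_lt_atBot (-R)] with t ht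
    exact (hG_lo s t ht).symm
  have hGtop : ∀ s, Tendsto (G s) atTop (𝓝 1) := by
    intro s
    refine tendsto_const_nhds.congr' ?_
    filter_upwards [eventually_ge_atTop R] with t ht
    exact (hG_hi s t ht).symm
  refine ⟨fun s => (G s).measure, fun s => (G s).isProbabilityMeasure (hGbot s) (hGtop s),
    ?_, ?_⟩
  · -- a.e. bound
    intro s
    have hIic : ∀ t, (G s).measure (Iic t) = ENNReal.ofReal (G s t) := by
      intro t
      rw [StieltjesFunction.measure_Iic (G s) (hGbot s), sub_zero]
    have hIoi : (G s).measure (Ioi R) = 0 := by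
      haveI := (G s).isProbabilityMeasure (hGbot s) (hGtop s)
      have : Ioi R = (Iic R)ᶜ := by simp
      rw [this, measure_compl measurableSet_Iic (measure_ne_top _ _), hIic,
        hG_hi s R le_rfl, measure_univ]
      simp
    have hIio : (G s).measure (Iio (-R)) = 0 := by
      have hsub : Iio (-R) ⊆ ⋃ n : ℕ, Iic (-R - 1 / (n + 1)) := by
        intro x hx
        obtain ⟨n, hn⟩ := exists_nat_one_div_lt (by linarith [mem_Iio.mp hx] : (0:ℝ) < -R - x)
        exact mem_iUnion.mpr ⟨n, by simp only [mem_Iic]; push_cast; linarith⟩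
      refine measure_mono_null hsub (measure_iUnion_null fun n => ?_)
      have hlt : -R - 1 / ((n:ℝ) + 1) < -R := by
        have : (0:ℝ) < 1 / ((n:ℝ) + 1) := by positivity
        linarith
      rw [hIic, hG_lo s _ hlt]
      simp
    rw [ae_iff]
    refine measure_mono_null (fun x hx => ?_) (measure_union_null hIio hIoi)
    simp only [mem_setOf_eq, not_le] at hx
    rcases lt_abs.mp hx with h | h
    · exact Or.inr h
    · exact Or.inl (show x ∈ Iio (-R) by simp only [mem_Iio]; linarith)
  · -- fixed point
    rw [hT]
    funext s
    haveI : ∀ s', IsProbabilityMeasure ((G s').measure) :=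
      fun s' => (G s').isProbabilityMeasure (hGbot s') (hGtop s')
    haveI : IsProbabilityMeasure (bellman pol Pk r γ (fun s' => (G s').measure) s) :=
      bellman_prob hpol hPk _ (fun s' => inferInstance) s
    refine Measure.ext_of_Iic _ _ fun t => ?_
    rw [bellman_Iic hγ0]
    have hIic : ∀ s' u, (G s').measure (Iic u) = ENNReal.ofReal (G s' u) := by
      intro s' u
      rw [StieltjesFunction.measure_Iic (G s') (hGbot s'), sub_zero]
    simp_rw [hIic]
    rw [hGrec s t, ENNReal.ofReal_sum_of_nonneg
      (fun a _ => Finset.sum_nonneg fun s' _ => mul_nonneg ENNReal.toReal_nonneg (hGnonneg _ _))]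
    refine Finset.sum_congr rfl fun a _ => ?_
    rw [ENNReal.ofReal_sum_of_nonneg
      (fun s' _ => mul_nonneg ENNReal.toReal_nonneg (hGnonneg _ _))]
    refine Finset.sum_congr rfl fun s' _ => ?_
    rw [ENNReal.ofReal_mul ENNReal.toReal_nonneg,
      ENNReal.ofReal_toReal (coef_ne_top hpol hPk s a s')]

end Exist

section Uniq
variable {S A : Type*} [Fintype S] [Fintype A]
variable {pol : S → A → ℝ≥0∞} {Pk : S → A → S → ℝ≥0∞} {r : S → A → ℝ} {γ : ℝ}

lemma integrable_abs_of_moment {p : ℝ} (hp : 1 ≤ p) (μ : Measure ℝ) [IsProbabilityMeasure μ]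
    (hm : ∫⁻ x, (‖x‖₊ : ℝ≥0∞) ^ p ∂μ < ∞) : Integrable (fun x : ℝ => |x|) μ := by
  refine ⟨continuous_abs.aestronglyMeasurable, ?_⟩
  show (∫⁻ x, (‖|x|‖₊ : ℝ≥0∞) ∂μ) < ∞
  have hb : ∀ x : ℝ, (‖|x|‖₊ : ℝ≥0∞) ≤ 1 + (‖x‖₊ : ℝ≥0∞) ^ p := by
    intro x
    rw [Real.nnnorm_abs]
    by_cases h : (‖x‖₊ : ℝ≥0∞) ≤ 1
    · exact h.trans le_self_add
    · push_neg at h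
      refine le_trans ?_ le_add_self
      calc (‖x‖₊ : ℝ≥0∞) = (‖x‖₊ : ℝ≥0∞) ^ (1:ℝ) := (ENNReal.rpow_one _).symm
        _ ≤ (‖x‖₊ : ℝ≥0∞) ^ p := ENNReal.rpow_le_rpow_of_exponent_le h.le hp
  calc ∫⁻ x, (‖|x|‖₊ : ℝ≥0∞) ∂μ ≤ ∫⁻ x, (1 + (‖x‖₊ : ℝ≥0∞) ^ p) ∂μ :=
        lintegral_mono fun x => hb x
    _ = 1 * μ univ + ∫⁻ x, (‖x‖₊ : ℝ≥0∞) ^ p ∂μ := by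
        rw [lintegral_add_left measurable_const, lintegral_const]
    _ < ∞ := by
        rw [measure_univ]
        exact ENNReal.add_lt_top.mpr ⟨by simp, hm⟩

lemma lipschitz_integrable {f : ℝ → ℝ} {L : ℝ≥0} (hf : LipschitzWith L f)
    (μ : Measure ℝ) [IsFiniteMeasure μ] (habs : Integrable (fun x : ℝ => |x|) μ) :
    Integrable f μ := by
  refine Integrable.mono ((integrable_const |f 0|).add (habs.const_mul (L:ℝ)))
    hf.continuous.aestronglyMeasurable ?_
  refine Eventually.of_forall fun x => ?_
  have h1 : |f x - f 0| ≤ (L:ℝ) * |x| := by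
    have := hf.dist_le_mul x 0
    simpa [Real.dist_eq] using this
  have h2 : |f x| ≤ |f 0| + (L:ℝ) * |x| := by
    have := abs_sub_abs_le_abs_sub (f x) (f 0)
    linarith
  have h3 : (0:ℝ) ≤ |f 0| + (L:ℝ) * |x| := by positivity
  simp only [Real.norm_eq_abs, Pi.add_apply]
  rwa [abs_of_nonneg h3]

lemma lipschitz_aff {L : ℝ≥0} {f : ℝ → ℝ} (hf : LipschitzWith L f) (c : ℝ) :
    LipschitzWith (L * Real.nnabs γ) (fun z : ℝ => f (c + γ * z)) := by
  have haff : LipschitzWith (Real.nnabs γ) (fun z : ℝ => c + γ * z) := by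
    refine LipschitzWith.of_dist_le_mul fun z w => ?_
    have he : (c + γ * z) - (c + γ * w) = γ * (z - w) := by ring
    rw [Real.dist_eq, he, abs_mul, Real.dist_eq]
    simp [Real.coe_nnabs]
  exact hf.comp haff

lemma integrable_f_aff {L : ℝ≥0} {f : ℝ → ℝ} (hf : LipschitzWith L f) (c : ℝ)
    (μ : Measure ℝ) [IsFiniteMeasure μ] (habs : Integrable (fun x : ℝ => |x|) μ) :
    Integrable (fun z : ℝ => f (c + γ * z)) μ :=
  lipschitz_integrable (lipschitz_aff hf c) μ habs

lemma integral_bellman (hpol : ∀ s, ∑ a : A, pol s a = 1) (hPk : ∀ s a, ∑ s' : S, Pk s a s' = 1)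
    (Z : S → Measure ℝ) (hprob : ∀ s, IsProbabilityMeasure (Z s))
    (habs : ∀ s, Integrable (fun x : ℝ => |x|) (Z s))
    {L : ℝ≥0} {f : ℝ → ℝ} (hf : LipschitzWith L f) (s : S) :
    ∫ x, f x ∂(bellman pol Pk r γ Z s)
      = ∑ a : A, ∑ s' : S, (pol s a * Pk s a s').toReal * ∫ z, f (r s a + γ * z) ∂(Z s') := by
  have hmapint : ∀ (a : A) (s' : S),
      Integrable f ((Z s').map (fun z => r s a + γ * z)) := by
    intro a s'
    have := hprob s'
    rw [integrable_map_measure hf.continuous.aestronglyMeasurable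
      (measurable_aff _ _).aemeasurable]
    exact integrable_f_aff hf (r s a) (Z s') (habs s')
  have hint : ∀ (a : A) (s' : S),
      Integrable f ((pol s a * Pk s a s') • (Z s').map (fun z => r s a + γ * z)) :=
    fun a s' => (hmapint a s').smul_measure (coef_ne_top hpol hPk s a s')
  rw [bellman]
  rw [integral_finset_sum_measure (fun a _ => integrable_finset_sum_measure.mpr
    (fun s' _ => hint a s'))]
  refine Finset.sum_congr rfl fun a _ => ?_
  rw [integral_finset_sum_measure (fun s' _ => hint a s')]
  refine Finset.sum_congr rfl fun s' _ => ?_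
  rw [integral_smul_measure, integral_map (measurable_aff _ _).aemeasurable
    hf.continuous.aestronglyMeasurable, smul_eq_mul]

end Uniq

section Uniq2
variable {S A : Type*} [Fintype S] [Fintype A]
variable {pol : S → A → ℝ≥0∞} {Pk : S → A → S → ℝ≥0∞} {r : S → A → ℝ} {γ : ℝ}

lemma fixed_point_unique (hpol : ∀ s, ∑ a : A, pol s a = 1)
    (hPk : ∀ s a, ∑ s' : S, Pk s a s' = 1) (hγ0 : 0 < γ) (hγ1 : γ < 1)
    (Z Z' : S → Measure ℝ)
    (hZp : ∀ s, IsProbabilityMeasure (Z s)) (hZ'p : ∀ s, IsProbabilityMeasure (Z' s))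
    (hZa : ∀ s, Integrable (fun x : ℝ => |x|) (Z s))
    (hZ'a : ∀ s, Integrable (fun x : ℝ => |x|) (Z' s))
    (hZf : bellman pol Pk r γ Z = Z) (hZ'f : bellman pol Pk r γ Z' = Z') : Z = Z' := by
  classical
  set K : ℝ := ∑ s : S, ((∫ x, |x| ∂(Z s)) + ∫ x, |x| ∂(Z' s)) with hK
  have hKb : ∀ s : S, (∫ x, |x| ∂(Z s)) + (∫ x, |x| ∂(Z' s)) ≤ K := by
    intro s
    exact Finset.single_le_sum (f := fun s => (∫ x, |x| ∂(Z s)) + ∫ x, |x| ∂(Z' s))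
      (fun i _ => add_nonneg (integral_nonneg fun x => abs_nonneg x)
        (integral_nonneg fun x => abs_nonneg x)) (Finset.mem_univ s)
  -- pointwise bound for 1-Lipschitz f with f 0 = 0
  have hfb : ∀ (f : ℝ → ℝ), LipschitzWith 1 f → f 0 = 0 → ∀ x : ℝ, |f x| ≤ |x| := by
    intro f hf hf0 x
    have := hf.dist_le_mul x 0
    simpa [Real.dist_eq, hf0] using this
  have claim : ∀ n : ℕ, ∀ f : ℝ → ℝ, LipschitzWith 1 f → f 0 = 0 → ∀ s : S,
      |(∫ x, f x ∂(Z s)) - ∫ x, f x ∂(Z' s)| ≤ γ ^ n * K := by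
    intro n
    induction n with
    | zero =>
      intro f hf hf0 s
      have habs_le : ∀ (μ : Measure ℝ), IsProbabilityMeasure μ →
          Integrable (fun x : ℝ => |x|) μ → |∫ x, f x ∂μ| ≤ ∫ x, |x| ∂μ := by
        intro μ hμ hμa
        calc |∫ x, f x ∂μ| = ‖∫ x, f x ∂μ‖ := (Real.norm_eq_abs _).symm
          _ ≤ ∫ x, ‖f x‖ ∂μ := norm_integral_le_integral_norm f
          _ = ∫ x, |f x| ∂μ := by simp [Real.norm_eq_abs]
          _ ≤ ∫ x, |x| ∂μ := integral_mono ((lipschitz_integrable hf μ hμa).abs) hμa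
              fun x => hfb f hf hf0 x
      have h1 : |∫ x, f x ∂(Z s)| ≤ ∫ x, |x| ∂(Z s) := habs_le (Z s) (hZp s) (hZa s)
      have h2 : |∫ x, f x ∂(Z' s)| ≤ ∫ x, |x| ∂(Z' s) := habs_le (Z' s) (hZ'p s) (hZ'a s)
      have := abs_sub (∫ x, f x ∂(Z s)) (∫ x, f x ∂(Z' s))
      calc |(∫ x, f x ∂(Z s)) - ∫ x, f x ∂(Z' s)|
          ≤ |∫ x, f x ∂(Z s)| + |∫ x, f x ∂(Z' s)| := abs_sub _ _
        _ ≤ (∫ x, |x| ∂(Z s)) + ∫ x, |x| ∂(Z' s) := add_le_add h1 h2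
        _ ≤ K := hKb s
        _ = γ ^ 0 * K := by simp
    | succ n ih =>
      intro f hf hf0 s
      have e1 := integral_bellman (r := r) (γ := γ) hpol hPk Z hZp hZa hf s
      rw [congrFun hZf s] at e1
      have e2 := integral_bellman (r := r) (γ := γ) hpol hPk Z' hZ'p hZ'a hf s
      rw [congrFun hZ'f s] at e2
      rw [e1, e2, ← Finset.sum_sub_distrib]
      refine (Finset.abs_sum_le_sum_abs _ _).trans ?_
      have hterm : ∀ a : A, |∑ s' : S, (pol s a * Pk s a s').toReal * (∫ z, f (r s a + γ * z) ∂(Z s'))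
          - ∑ s' : S, (pol s a * Pk s a s').toReal * ∫ z, f (r s a + γ * z) ∂(Z' s')|
          ≤ ∑ s' : S, (pol s a * Pk s a s').toReal * (γ ^ (n + 1) * K) := by
        intro a
        rw [← Finset.sum_sub_distrib]
        refine (Finset.abs_sum_le_sum_abs _ _).trans (Finset.sum_le_sum fun s' _ => ?_)
        rw [← mul_sub, abs_mul, abs_of_nonneg ENNReal.toReal_nonneg]
        refine mul_le_mul_of_nonneg_left ?_ ENNReal.toReal_nonneg
        -- the inner contraction step
        set h : ℝ → ℝ := fun z => (f (r s a + γ * z) - f (r s a)) / γ with hh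
        have hhlip : LipschitzWith 1 h := by
          refine LipschitzWith.of_dist_le_mul fun z w => ?_
          have hd : h z - h w = (f (r s a + γ * z) - f (r s a + γ * w)) / γ := by
            rw [hh]; ring
          rw [Real.dist_eq, hd, abs_div, abs_of_pos hγ0, div_le_iff₀ hγ0]
          have := hf.dist_le_mul (r s a + γ * z) (r s a + γ * w)
          rw [Real.dist_eq, Real.dist_eq] at this
          have he : (r s a + γ * z) - (r s a + γ * w) = γ * (z - w) := by ring
          rw [he, abs_mul, abs_of_pos hγ0] at this
          calc |f (r s a + γ * z) - f (r s a + γ * w)| ≤ 1 * (|γ| * |z - w|) := by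
                rw [abs_of_pos hγ0]; exact this
            _ = 1 * |z - w| * γ := by rw [abs_of_pos hγ0]; ring
        have hh0 : h 0 = 0 := by simp [hh]
        have hdecomp : ∀ (μ : Measure ℝ), IsProbabilityMeasure μ →
            Integrable (fun x : ℝ => |x|) μ →
            ∫ z, f (r s a + γ * z) ∂μ = f (r s a) + γ * ∫ z, h z ∂μ := by
          intro μ hμ hμa
          have hfa : Integrable (fun z : ℝ => f (r s a + γ * z)) μ :=
            integrable_f_aff hf (r s a) μ hμa
          have hhint : Integrable h μ := (hfa.sub (integrable_const _)).div_const γ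
          have hfeq : (fun z : ℝ => f (r s a + γ * z)) = fun z => f (r s a) + γ * h z := by
            funext z
            rw [hh]
            field_simp
            ring
          rw [hfeq, integral_add (integrable_const _) (hhint.const_mul γ),
            integral_const, integral_const_mul]
          simp [measure_univ]
        rw [hdecomp (Z s') (hZp s') (hZa s'), hdecomp (Z' s') (hZ'p s') (hZ'a s')]
        have he : (f (r s a) + γ * ∫ z, h z ∂(Z s')) - (f (r s a) + γ * ∫ z, h z ∂(Z' s'))
            = γ * ((∫ z, h z ∂(Z s')) - ∫ z, h z ∂(Z' s')) := by ring
        rw [he, abs_mul, abs_of_pos hγ0, pow_succ, mul_comm (γ ^ n) γ, mul_assoc]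
        exact mul_le_mul_of_nonneg_left (ih h hhlip hh0 s') hγ0.le
      refine (Finset.sum_le_sum fun a _ => hterm a).trans ?_
      simp_rw [← Finset.sum_mul]
      rw [coef_toReal_sum hpol hPk s, one_mul]
  -- limit: integrals of 1-Lipschitz functions agree
  have hint_eq : ∀ f : ℝ → ℝ, LipschitzWith 1 f → f 0 = 0 → ∀ s : S,
      (∫ x, f x ∂(Z s)) = ∫ x, f x ∂(Z' s) := by
    intro f hf hf0 s
    have hlim : Tendsto (fun n : ℕ => γ ^ n * K) atTop (𝓝 0) := by
      have := (tendsto_pow_atTop_nhds_zero_of_lt_one hγ0.le hγ1).mul_const K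
      simpa using this
    have hle : |(∫ x, f x ∂(Z s)) - ∫ x, f x ∂(Z' s)| ≤ 0 :=
      ge_of_tendsto hlim (Eventually.of_forall fun n => claim n f hf hf0 s)
    have := abs_nonpos_iff.mp hle
    linarith [sub_eq_zero.mp this]
  -- integrals of all Lipschitz functions agree
  have hint_eq' : ∀ (L : ℝ≥0) (f : ℝ → ℝ), LipschitzWith L f → ∀ s : S,
      (∫ x, f x ∂(Z s)) = ∫ x, f x ∂(Z' s) := by
    intro L f hLf s
    by_cases hL : (L : ℝ) = 0
    · have hconst : f = fun _ => f 0 := by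
        funext x
        have h := hLf.dist_le_mul x 0
        rw [hL] at h
        simp only [zero_mul] at h
        have : dist (f x) (f 0) = 0 := le_antisymm h dist_nonneg
        exact dist_eq_zero.mp this
      rw [hconst]
      haveI := hZp s; haveI := hZ'p s
      simp [integral_const]
    · have hLpos : (0:ℝ) < L := lt_of_le_of_ne L.coe_nonneg (Ne.symm hL)
      set g : ℝ → ℝ := fun x => (f x - f 0) / L with hg
      have hglip : LipschitzWith 1 g := by
        refine LipschitzWith.of_dist_le_mul fun z w => ?_
        have hd : g z - g w = (f z - f w) / L := by rw [hg]; ring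
        rw [Real.dist_eq, hd, abs_div, abs_of_pos hLpos, div_le_iff₀ hLpos]
        have h := hLf.dist_le_mul z w
        rw [Real.dist_eq, Real.dist_eq] at h
        push_cast [Real.dist_eq]
        linarith [h]
      have hg0 : g 0 = 0 := by simp [hg]
      have hfeq : f = fun x => (L:ℝ) * g x + f 0 := by
        funext x
        rw [hg]
        field_simp
        ring
      have hgint1 : Integrable g (Z s) := lipschitz_integrable hglip (Z s) (hZa s)
      have hgint2 : Integrable g (Z' s) := lipschitz_integrable hglip (Z' s) (hZ'a s)
      haveI := hZp s; haveI := hZ'p s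
      rw [hfeq, integral_add (hgint1.const_mul _) (integrable_const _),
        integral_add (hgint2.const_mul _) (integrable_const _),
        integral_const_mul, integral_const_mul, hint_eq g hglip hg0 s]
      simp
  -- conclude equality of the measures via CDFs
  funext s
  haveI := hZp s; haveI := hZ'p s
  refine Measure.ext_of_Iic (Z s) (Z' s) fun t => ?_
  set Fk : ℕ → ℝ → ℝ := fun k x => max 0 (min 1 (1 - ((k:ℝ) + 1) * (x - t))) with hFk
  have hFkLip : ∀ k : ℕ, LipschitzWith ((k:ℝ≥0) + 1) (Fk k) := by
    intro k
    have hinner : LipschitzWith ((k:ℝ≥0) + 1) (fun x : ℝ => 1 - ((k:ℝ) + 1) * (x - t)) := by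
      refine LipschitzWith.of_dist_le_mul fun z w => ?_
      have hd : (1 - ((k:ℝ) + 1) * (z - t)) - (1 - ((k:ℝ) + 1) * (w - t))
          = ((k:ℝ) + 1) * (w - z) := by ring
      rw [Real.dist_eq, hd, abs_mul, Real.dist_eq]
      have h1 : |(k:ℝ) + 1| = (k:ℝ) + 1 := abs_of_pos (by positivity)
      have h2 : |w - z| = |z - w| := abs_sub_comm w z
      rw [h1, h2]
      push_cast [Real.dist_eq]
      exact le_rfl
    exact (hinner.const_min 1).const_max 0
  have hFk_nonneg : ∀ k x, 0 ≤ Fk k x := fun k x => le_max_left _ _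
  have hFk_le_one : ∀ k x, Fk k x ≤ 1 := fun k x =>
    max_le zero_le_one (min_le_left _ _)
  have hlim : ∀ x : ℝ, Tendsto (fun k => Fk k x) atTop (𝓝 ((Iic t).indicator (fun _ => (1:ℝ)) x)) := by
    intro x
    by_cases hx : x ≤ t
    · have : ∀ k : ℕ, Fk k x = 1 := by
        intro k
        have h1 : (1:ℝ) ≤ 1 - ((k:ℝ) + 1) * (x - t) := by nlinarith [sub_nonpos.mpr hx]
        show max 0 (min 1 (1 - ((k:ℝ) + 1) * (x - t))) = 1
        rw [min_eq_left h1, max_eq_right zero_le_one]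
      rw [indicator_of_mem (mem_Iic.mpr hx)]
      exact tendsto_const_nhds.congr fun k => (this k).symm
    · push_neg at hx
      rw [indicator_of_notMem (by simpa using not_le.mpr hx)]
      obtain ⟨N, hN⟩ := exists_nat_gt (1 / (x - t))
      refine tendsto_const_nhds.congr' ?_
      filter_upwards [eventually_ge_atTop N] with k hk
      have hxt : 0 < x - t := sub_pos.mpr hx
      have h1 : 1 - ((k:ℝ) + 1) * (x - t) ≤ 0 := by
        have hkN : (N:ℝ) ≤ (k:ℝ) := by exact_mod_cast hk
        have : 1 / (x - t) < (k:ℝ) + 1 := by linarith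
        rw [div_lt_iff₀ hxt] at this
        nlinarith
      have h2 : min 1 (1 - ((k:ℝ) + 1) * (x - t)) ≤ 0 := le_trans (min_le_right _ _) h1
      show (0:ℝ) = max 0 (min 1 (1 - ((k:ℝ) + 1) * (x - t)))
      rw [max_eq_left h2]
  have htend : ∀ (μ : Measure ℝ), IsProbabilityMeasure μ →
      Tendsto (fun k => ∫ x, Fk k x ∂μ) atTop (𝓝 ((μ (Iic t)).toReal)) := by
    intro μ hμ
    have := tendsto_integral_of_dominated_convergence (μ := μ)
      (F := fun k x => Fk k x) (f := (Iic t).indicator (fun _ => (1:ℝ)))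
      (bound := fun _ => (1:ℝ))
      (fun k => (hFkLip k).continuous.aestronglyMeasurable)
      (integrable_const 1)
      (fun k => Eventually.of_forall fun x => by
        rw [Real.norm_eq_abs, abs_of_nonneg (hFk_nonneg k x)]
        exact hFk_le_one k x)
      (Eventually.of_forall hlim)
    rwa [integral_indicator_const (1:ℝ) measurableSet_Iic, smul_eq_mul, mul_one] at this
  have heq : (Z s (Iic t)).toReal = (Z' s (Iic t)).toReal := by
    refine tendsto_nhds_unique (htend (Z s) (hZp s)) ?_
    exact ((htend (Z' s) (hZ'p s)).congr fun k => (hint_eq' _ _ (hFkLip k) s).symm)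
  exact (ENNReal.toReal_eq_toReal_iff' (measure_ne_top _ _) (measure_ne_top _ _)).mp heq

end Uniq2

section Zero
variable {S A : Type*} [Fintype S] [Fintype A]
variable {pol : S → A → ℝ≥0∞} {Pk : S → A → S → ℝ≥0∞} {r : S → A → ℝ}

lemma bellman_zero (Z : S → Measure ℝ) (hZ : ∀ s, IsProbabilityMeasure (Z s)) :
    bellman pol Pk r 0 Z
      = fun s => ∑ a : A, ∑ s' : S, (pol s a * Pk s a s') • Measure.dirac (r s a) := by
  funext s
  rw [bellman]
  refine Finset.sum_congr rfl fun a _ => Finset.sum_congr rfl fun s' _ => ?_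
  have hco : (fun z : ℝ => r s a + 0 * z) = fun _ => r s a := by funext z; ring
  rw [hco, Measure.map_const, (hZ s').measure_univ, one_smul]

end Zero

/-- The distributional Bellman operator has a unique fixed point among families of
probability measures on ℝ with finite p-th moments. -/
theorem bellman_unique_fixed_point {S A : Type*} [Fintype S] [Fintype A]
    [Nonempty S] [Nonempty A]
    (pol : S → A → ℝ≥0∞) (hpol : ∀ s, ∑ a : A, pol s a = 1)
    (Pk : S → A → S → ℝ≥0∞) (hPk : ∀ s a, ∑ s' : S, Pk s a s' = 1)
    (r : S → A → ℝ) (γ : ℝ) (hγ0 : 0 ≤ γ) (hγ1 : γ < 1)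
    (p : ℝ) (hp : 1 ≤ p) :
    ∃! pπ : S → MeasureTheory.Measure ℝ,
      (∀ s, IsProbabilityMeasure (pπ s)) ∧
      (∀ s, ∫⁻ x, (‖x‖₊ : ℝ≥0∞) ^ p ∂(pπ s) < ∞) ∧
      bellman pol Pk r γ pπ = pπ := by
  classical
  rcases eq_or_lt_of_le hγ0 with hγeq | hγpos
  · -- γ = 0
    subst hγeq
    set pπ : S → Measure ℝ :=
      fun s => ∑ a : A, ∑ s' : S, (pol s a * Pk s a s') • Measure.dirac (r s a) with hpπ
    have hdirac_prob : ∀ s : S, IsProbabilityMeasure ((fun _ : S => Measure.dirac (0:ℝ)) s) :=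
      fun _ => by infer_instance
    have hpπ_eq : bellman pol Pk r 0 (fun _ => Measure.dirac 0) = pπ :=
      bellman_zero _ hdirac_prob
    have hprob : ∀ s, IsProbabilityMeasure (pπ s) := by
      intro s
      rw [← hpπ_eq]
      exact bellman_prob hpol hPk _ hdirac_prob s
    have hfix : bellman pol Pk r 0 pπ = pπ := (bellman_zero pπ hprob).trans hpπ.symm
    have hmom : ∀ s, ∫⁻ x, (‖x‖₊ : ℝ≥0∞) ^ p ∂(pπ s) < ∞ := by
      intro s
      rw [hpπ]
      simp only [lintegral_finset_sum_measure, lintegral_smul_measure, lintegral_dirac]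
      refine ENNReal.sum_lt_top.mpr fun a _ => ENNReal.sum_lt_top.mpr fun s' _ => ?_
      exact ENNReal.mul_lt_top (lt_top_iff_ne_top.mpr (coef_ne_top hpol hPk s a s'))
        (ENNReal.rpow_lt_top_of_nonneg (le_trans zero_le_one hp) ENNReal.coe_ne_top)
    refine ⟨pπ, ⟨hprob, hmom, hfix⟩, ?_⟩
    rintro y ⟨hyp, hym, hyf⟩
    calc y = bellman pol Pk r 0 y := hyf.symm
      _ = pπ := (bellman_zero y hyp).trans hpπ.symm
  · -- γ > 0
    have hAS : (Finset.univ : Finset (S × A)).Nonempty := Finset.univ_nonempty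
    set M : ℝ := max 0 ((Finset.univ : Finset (S × A)).sup' hAS fun sa => |r sa.1 sa.2|) with hM
    have hM0 : 0 ≤ M := le_max_left _ _
    have hMr : ∀ s a, |r s a| ≤ M := fun s a =>
      le_max_of_le_right (Finset.le_sup' (f := fun sa : S × A => |r sa.1 sa.2|)
        (Finset.mem_univ (s, a)))
    set R : ℝ := M / (1 - γ) with hRdef
    have h1γ : 0 < 1 - γ := by linarith
    have hR0 : 0 ≤ R := div_nonneg hM0 h1γ.le
    have hMR : M = (1 - γ) * R := by
      rw [hRdef]
      field_simp
    have hR : ∀ s a, |r s a| + γ * R ≤ R := by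
      intro s a
      have := hMr s a
      nlinarith
    obtain ⟨pπ, hprob, hae, hfix⟩ := exists_fixed hpol hPk hγpos hγ1 R hR0 hR
    have hmom : ∀ s, ∫⁻ x, (‖x‖₊ : ℝ≥0∞) ^ p ∂(pπ s) < ∞ := by
      intro s
      have hb : ∀ᵐ x ∂(pπ s), (‖x‖₊ : ℝ≥0∞) ^ p ≤ (ENNReal.ofReal R) ^ p := by
        filter_upwards [hae s] with x hx
        refine ENNReal.rpow_le_rpow ?_ (le_trans zero_le_one hp)
        rw [← enorm_eq_nnnorm, Real.enorm_eq_ofReal_abs]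
        exact ENNReal.ofReal_le_ofReal hx
      calc ∫⁻ x, (‖x‖₊ : ℝ≥0∞) ^ p ∂(pπ s) ≤ ∫⁻ _, (ENNReal.ofReal R) ^ p ∂(pπ s) :=
            lintegral_mono_ae hb
        _ = (ENNReal.ofReal R) ^ p * (pπ s) univ := lintegral_const _
        _ < ∞ := by
            haveI := hprob s
            rw [measure_univ, mul_one]
            exact ENNReal.rpow_lt_top_of_nonneg (le_trans zero_le_one hp) ENNReal.ofReal_ne_top
    refine ⟨pπ, ⟨hprob, hmom, hfix⟩, ?_⟩
    rintro y ⟨hyp, hym, hyf⟩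
    exact fixed_point_unique hpol hPk hγpos hγ1 y pπ hyp hprob
      (fun s => integrable_abs_of_moment hp (y s) (hym s))
      (fun s => integrable_abs_of_moment hp (pπ s) (hmom s)) hyf hfix
end
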